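/- Let k ≥ 2 be an integer, A > 1, M > 0 real numbers, γ = A^{-1/k}, and let d₁, …, d_k be real numbers with |d₁| ≥ A and |d₁ d_i| ≤ M for all 2 ≤ i ≤ k. Let B be the real symmetric k×k matrix with entries b_{i,l} = γ^{2k-i-l} d_i d_l for i ≠ l, b_{1,1} = γ^{2k-2} d₁², and b_{i,i} = γ^{-2} + γ^{2(k-i)} d_i² for i > 1. Then every eigenvalue of B is greater than or equal to γ^{-2} - M(k-1)γ^{k-1} - M²(k-2)γ^{2k+1}; equivalently, for every x ∈ ℝ^k, xᵀ B x ≥ (γ^{-2} - M(k-1)γ^{k-1} - M²(k-2)γ^{2k+1}) ‖x‖². -/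
import Mathlib


open Finset


lemma abs_quad_bound (b xi xl : ℝ) :
    -(|b| * (xi ^ 2 + xl ^ 2) / 2) ≤ xi * b * xl := by
  nlinarith [neg_abs_le b, le_abs_self b, sq_nonneg (xi + xl), sq_nonneg (xi - xl)]

lemma sum_erase_comm {n : ℕ} (f : Fin n → Fin n → ℝ) :
    ∑ i, ∑ l ∈ univ.erase i, f i l = ∑ l, ∑ i ∈ univ.erase l, f i l := by
  have h : ∀ (g : Fin n → Fin n → ℝ),
      ∑ i, ∑ l ∈ univ.erase i, g i l = ∑ i, ∑ l, g i l - ∑ i, g i i := by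
    intro g
    rw [← Finset.sum_sub_distrib]
    exact Finset.sum_congr rfl fun i _ => Finset.sum_erase_eq_sub (Finset.mem_univ i)
  rw [h, h fun a b => f b a, Finset.sum_comm]

lemma gershgorin_quad {n : ℕ} (B : Matrix (Fin n) (Fin n) ℝ) (hsym : ∀ i l, B i l = B l i)
    (c : ℝ) (hrow : ∀ i, c + ∑ l ∈ univ.erase i, |B i l| ≤ B i i) :
    ∀ x : Fin n → ℝ, c * ∑ i, x i ^ 2 ≤ ∑ i, ∑ l, x i * B i l * x l := by
  intro x
  set R : Fin n → ℝ := fun i => ∑ l ∈ univ.erase i, |B i l| with hR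
  have hoff : -∑ i, R i * x i ^ 2 ≤ ∑ i, ∑ l ∈ univ.erase i, x i * B i l * x l := by
    have step1 : ∑ i, ∑ l ∈ univ.erase i, (-(|B i l| * (x i ^ 2 + x l ^ 2) / 2))
        ≤ ∑ i, ∑ l ∈ univ.erase i, x i * B i l * x l :=
      Finset.sum_le_sum fun i _ => Finset.sum_le_sum fun l _ => abs_quad_bound _ _ _
    refine le_trans (le_of_eq ?_) step1
    have expand : ∀ i l : Fin n, -(|B i l| * (x i ^ 2 + x l ^ 2) / 2)
        = |B i l| * (-(x i ^ 2) / 2) + |B i l| * (-(x l ^ 2) / 2) := by intros; ring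
    simp_rw [expand, Finset.sum_add_distrib]
    rw [sum_erase_comm (fun i l => |B i l| * (-(x l ^ 2) / 2))]
    have h2 : ∀ l : Fin n, ∑ i ∈ univ.erase l, |B i l| * (-(x l ^ 2) / 2)
        = R l * (-(x l ^ 2) / 2) := by
      intro l
      rw [hR, ← Finset.sum_mul]
      congr 1
      exact Finset.sum_congr rfl fun i _ => by rw [hsym i l]
    have h3 : ∀ i : Fin n, ∑ l ∈ univ.erase i, |B i l| * (-(x i ^ 2) / 2)
        = R i * (-(x i ^ 2) / 2) := fun i => by rw [hR, ← Finset.sum_mul]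
    simp_rw [h2, h3]
    rw [← Finset.sum_add_distrib, ← Finset.sum_neg_distrib]
    exact Finset.sum_congr rfl fun i _ => by ring
  calc c * ∑ i, x i ^ 2 = ∑ i, c * x i ^ 2 := Finset.mul_sum _ _ _
    _ ≤ ∑ i, (B i i - R i) * x i ^ 2 :=
        Finset.sum_le_sum fun i _ =>
          mul_le_mul_of_nonneg_right (by linarith [hrow i]) (sq_nonneg _)
    _ = ∑ i, B i i * x i ^ 2 - ∑ i, R i * x i ^ 2 := by
        rw [← Finset.sum_sub_distrib]; exact Finset.sum_congr rfl fun i _ => by ring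
    _ ≤ ∑ i, B i i * x i ^ 2 + ∑ i, ∑ l ∈ univ.erase i, x i * B i l * x l := by linarith
    _ = ∑ i, ∑ l, x i * B i l * x l := by
        rw [← Finset.sum_add_distrib]
        exact Finset.sum_congr rfl fun i _ => by
          rw [← Finset.add_sum_erase _ _ (Finset.mem_univ i)]; ring_nf

/-- Gershgorin-type lower bound for the eigenvalues (equivalently, for the
quadratic form) of the symmetric matrix `B` built from the partial derivatives data `d`.
Indices are 0-based: the paper's index `i ∈ {1,…,k}` corresponds to `i - 1 : Fin k`. -/
theorem eigenvalue_lower_bound (k : ℕ) (hk : 2 ≤ k) (A M : ℝ) (hA : 1 < A) (hM : 0 < M)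
    (γ : ℝ) (hγ : γ = A ^ (-(1 / (k : ℝ))))
    (d : Fin k → ℝ)
    (hd1 : |d ⟨0, by omega⟩| ≥ A)
    (hdi : ∀ i : Fin k, i ≠ ⟨0, by omega⟩ → |d ⟨0, by omega⟩ * d i| ≤ M)
    (B : Matrix (Fin k) (Fin k) ℝ)
    (hB : ∀ i l : Fin k,
      B i l =
        if i = l then
          (if (i : ℕ) = 0 then γ ^ (2 * k - 2) * d i ^ 2
           else 1 / γ ^ 2 + γ ^ (2 * (k - 1 - (i : ℕ))) * d i ^ 2)
        else γ ^ (2 * k - 2 - (i : ℕ) - (l : ℕ)) * d i * d l) :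
    (∀ μ : ℝ, Module.End.HasEigenvalue (Matrix.toLin' B) μ →
        μ ≥ 1 / γ ^ 2 - M * ((k : ℝ) - 1) * γ ^ (k - 1) - M ^ 2 * ((k : ℝ) - 2) * γ ^ (2 * k + 1)) ∧
      (∀ x : Fin k → ℝ,
        ∑ i, ∑ l, x i * B i l * x l ≥
          (1 / γ ^ 2 - M * ((k : ℝ) - 1) * γ ^ (k - 1) - M ^ 2 * ((k : ℝ) - 2) * γ ^ (2 * k + 1)) *
            ∑ i, x i ^ 2) := by
  have hk0 : 0 < k := by omega
  have hA0 : (0:ℝ) < A := by linarith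
  have hγ0 : 0 < γ := hγ ▸ Real.rpow_pos_of_pos hA0 _
  have hγ1 : γ < 1 := by
    rw [hγ]
    apply Real.rpow_lt_one_of_one_lt_of_neg hA
    have : (0:ℝ) < 1 / k := by positivity
    linarith
  have hγk : γ ^ k * A = 1 := by
    have hm : (-(1 / (k : ℝ))) * k = -1 := by field_simp
    rw [hγ, ← Real.rpow_natCast (A ^ (-(1 / (k:ℝ)))) k, ← Real.rpow_mul hA0.le, hm,
      Real.rpow_neg_one]
    exact inv_mul_cancel₀ (ne_of_gt hA0)
  have hγkA : γ ^ k = A⁻¹ := by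
    field_simp at hγk ⊢
    linarith [hγk]
  set e0 : Fin k := ⟨0, by omega⟩ with he0
  have hMγ : ∀ l : Fin k, l ≠ e0 → |d l| ≤ M * γ ^ k := by
    intro l hl
    have h := hdi l hl
    rw [abs_mul] at h
    have h2 : |d l| * A ≤ M := by nlinarith [abs_nonneg (d l), abs_nonneg (d e0)]
    rw [hγkA]
    calc |d l| = |d l| * A * A⁻¹ := by field_simp
      _ ≤ M * A⁻¹ := by gcongr
  -- symmetry
  have hsym : ∀ i l, B i l = B l i := by
    intro i l
    rw [hB i l, hB l i]
    by_cases h : i = l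
    · subst h; rfl
    · rw [if_neg h, if_neg (Ne.symm h)]
      have he : 2 * k - 2 - (i:ℕ) - (l:ℕ) = 2 * k - 2 - (l:ℕ) - (i:ℕ) := by omega
      rw [he]; ring
  -- diagonal bound
  have hdiag : ∀ i : Fin k, 1 / γ ^ 2 ≤ B i i := by
    intro i
    rw [hB i i, if_pos rfl]
    by_cases h0 : (i:ℕ) = 0
    · rw [if_pos h0]
      have hie : i = e0 := Fin.ext h0
      subst hie
      have hd2 : A ^ 2 ≤ d e0 ^ 2 := by nlinarith [abs_nonneg (d e0), sq_abs (d e0)]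
      have hpow : γ ^ (2 * k - 2) * γ ^ 2 = (γ ^ k) ^ 2 := by
        rw [← pow_add, ← pow_mul]
        congr 1
        omega
      have key : γ ^ (2 * k - 2) * A ^ 2 * γ ^ 2 = 1 := by
        calc γ ^ (2 * k - 2) * A ^ 2 * γ ^ 2 = γ ^ (2 * k - 2) * γ ^ 2 * A ^ 2 := by ring
          _ = (γ ^ k) ^ 2 * A ^ 2 := by rw [hpow]
          _ = (γ ^ k * A) ^ 2 := by ring
          _ = 1 := by rw [hγk]; norm_num
      have heq : 1 / γ ^ 2 = γ ^ (2 * k - 2) * A ^ 2 := by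
        rw [eq_comm, eq_div_iff (by positivity : γ ^ 2 ≠ 0)]
        exact key
      rw [heq]
      have : (0:ℝ) ≤ γ ^ (2 * k - 2) := by positivity
      nlinarith
    · rw [if_neg h0]
      have : (0:ℝ) ≤ γ ^ (2 * (k - 1 - (i:ℕ))) * d i ^ 2 := by positivity
      linarith
  set c : ℝ := 1 / γ ^ 2 - M * ((k : ℝ) - 1) * γ ^ (k - 1) - M ^ 2 * ((k : ℝ) - 2) * γ ^ (2 * k + 1)
    with hc
  have hkR : (2:ℝ) ≤ (k:ℝ) := by exact_mod_cast hk
  have hbound0 : ∀ l : Fin k, l ≠ e0 → |B e0 l| ≤ M * γ ^ (k - 1) := by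
    intro l hl
    rw [hB, if_neg (Ne.symm hl), mul_assoc, abs_mul, abs_of_nonneg (by positivity : (0:ℝ) ≤ γ ^ (2 * k - 2 - (e0:ℕ) - (l:ℕ)))]
    have h0 : (e0:ℕ) = 0 := rfl
    have hexp : γ ^ (2 * k - 2 - (e0:ℕ) - (l:ℕ)) ≤ γ ^ (k - 1) := by
      apply pow_le_pow_of_le_one hγ0.le hγ1.le
      have := l.isLt
      omega
    calc γ ^ (2 * k - 2 - (e0:ℕ) - (l:ℕ)) * |d e0 * d l| ≤ γ ^ (k - 1) * M :=
        mul_le_mul hexp (hdi l hl) (abs_nonneg _) (by positivity)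
      _ = M * γ ^ (k - 1) := by ring
  have hbound2 : ∀ i l : Fin k, i ≠ e0 → l ≠ e0 → i ≠ l →
      |B i l| ≤ M ^ 2 * γ ^ (2 * k + 1) := by
    intro i l hi hl hil
    rw [hB, if_neg hil, abs_mul, abs_mul, abs_of_nonneg (by positivity : (0:ℝ) ≤ γ ^ (2 * k - 2 - (i:ℕ) - (l:ℕ)))]
    have hvi : (i:ℕ) ≠ 0 := fun h => hi (Fin.ext h)
    have hvl : (l:ℕ) ≠ 0 := fun h => hl (Fin.ext h)
    have hvil : (i:ℕ) ≠ (l:ℕ) := fun h => hil (Fin.ext h)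
    have hexp : γ ^ (2 * k - 2 - (i:ℕ) - (l:ℕ)) ≤ γ := by
      have h1 : γ ^ (2 * k - 2 - (i:ℕ) - (l:ℕ)) ≤ γ ^ 1 := by
        apply pow_le_pow_of_le_one hγ0.le hγ1.le
        have := i.isLt
        have := l.isLt
        omega
      rwa [pow_one] at h1
    calc γ ^ (2 * k - 2 - (i:ℕ) - (l:ℕ)) * |d i| * |d l|
        ≤ γ * (M * γ ^ k) * (M * γ ^ k) := by
          have h1 := hMγ i hi
          have h2 := hMγ l hl
          gcongr <;> positivity
      _ = M ^ 2 * γ ^ (2 * k + 1) := by ring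
  have hrowsum : ∀ i : Fin k, ∑ l ∈ univ.erase i, |B i l| ≤
      M * ((k:ℝ) - 1) * γ ^ (k - 1) + M ^ 2 * ((k:ℝ) - 2) * γ ^ (2 * k + 1) := by
    intro i
    have hnn1 : (0:ℝ) ≤ M ^ 2 * ((k:ℝ) - 2) * γ ^ (2 * k + 1) := by
      apply mul_nonneg (mul_nonneg (by positivity) (by linarith)) (by positivity)
    by_cases hi : i = e0
    · subst hi
      have hcard : ((univ.erase e0).card : ℝ) = (k:ℝ) - 1 := by
        rw [Finset.card_erase_of_mem (Finset.mem_univ _), Finset.card_univ, Fintype.card_fin]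
        push_cast [Nat.cast_sub (by omega : 1 ≤ k)]
        ring
      calc ∑ l ∈ univ.erase e0, |B e0 l| ≤ ∑ _l ∈ univ.erase e0, M * γ ^ (k - 1) :=
          Finset.sum_le_sum fun l hl => hbound0 l (Finset.ne_of_mem_erase hl)
        _ = ((k:ℝ) - 1) * (M * γ ^ (k - 1)) := by
            rw [Finset.sum_const, nsmul_eq_mul, hcard]
        _ ≤ M * ((k:ℝ) - 1) * γ ^ (k - 1) + M ^ 2 * ((k:ℝ) - 2) * γ ^ (2 * k + 1) := by
            have : ((k:ℝ) - 1) * (M * γ ^ (k - 1)) = M * ((k:ℝ) - 1) * γ ^ (k - 1) := by ring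
            linarith
    · have hmem : e0 ∈ univ.erase i := Finset.mem_erase.mpr ⟨Ne.symm hi, Finset.mem_univ _⟩
      rw [← Finset.add_sum_erase _ _ hmem]
      have hBi0 : |B i e0| ≤ M * γ ^ (k - 1) := by rw [hsym]; exact hbound0 i hi
      have hcard : (((univ.erase i).erase e0).card : ℝ) = (k:ℝ) - 2 := by
        rw [Finset.card_erase_of_mem hmem, Finset.card_erase_of_mem (Finset.mem_univ _),
          Finset.card_univ, Fintype.card_fin]
        have h22 : k - 1 - 1 = k - 2 := by omega
        rw [h22, Nat.cast_sub (by omega : 2 ≤ k)]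
        norm_num
      have hrest : ∑ l ∈ (univ.erase i).erase e0, |B i l| ≤
          ((k:ℝ) - 2) * (M ^ 2 * γ ^ (2 * k + 1)) := by
        calc ∑ l ∈ (univ.erase i).erase e0, |B i l|
            ≤ ∑ _l ∈ (univ.erase i).erase e0, M ^ 2 * γ ^ (2 * k + 1) :=
            Finset.sum_le_sum fun l hl => by
              have hl1 : l ≠ e0 := (Finset.mem_erase.mp hl).1
              have hl2 : l ≠ i := (Finset.mem_erase.mp (Finset.mem_of_mem_erase hl)).1
              exact hbound2 i l hi hl1 (Ne.symm hl2)
          _ = ((k:ℝ) - 2) * (M ^ 2 * γ ^ (2 * k + 1)) := by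
              rw [Finset.sum_const, nsmul_eq_mul, hcard]
      have h1 : M * γ ^ (k - 1) ≤ M * ((k:ℝ) - 1) * γ ^ (k - 1) := by
        nlinarith [mul_nonneg hM.le (pow_nonneg hγ0.le (k - 1)), hkR]
      have h2 : ((k:ℝ) - 2) * (M ^ 2 * γ ^ (2 * k + 1)) =
          M ^ 2 * ((k:ℝ) - 2) * γ ^ (2 * k + 1) := by ring
      linarith
  have hrow : ∀ i : Fin k, c + ∑ l ∈ univ.erase i, |B i l| ≤ B i i := by
    intro i
    have h1 := hdiag i
    have h2 := hrowsum i
    rw [hc]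
    linarith
  have part2 := gershgorin_quad B hsym c hrow
  refine ⟨?_, fun x => part2 x⟩
  intro μ hμ
  obtain ⟨v, hv⟩ := hμ.exists_hasEigenvector
  have happ : B.mulVec v = μ • v := by
    rw [← Matrix.toLin'_apply]
    exact hv.apply_eq_smul
  have hquad : ∑ i, ∑ l, v i * B i l * v l = μ * ∑ i, v i ^ 2 := by
    have hinner : ∀ i, ∑ l, v i * B i l * v l = v i * (B.mulVec v i) := by
      intro i
      rw [Matrix.mulVec, dotProduct, Finset.mul_sum]
      exact Finset.sum_congr rfl fun l _ => by ring
    simp_rw [hinner, happ, Pi.smul_apply, smul_eq_mul, Finset.mul_sum]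
    exact Finset.sum_congr rfl fun i _ => by ring
  have hpos : 0 < ∑ i, v i ^ 2 := by
    obtain ⟨j, hj⟩ := Function.ne_iff.mp hv.2
    have hj' : v j ≠ 0 := by simpa using hj
    exact Finset.sum_pos' (fun i _ => sq_nonneg _)
      ⟨j, Finset.mem_univ _, sq_pos_iff.mpr hj'⟩
  have h := part2 v
  rw [hquad] at h
  exact le_of_mul_le_mul_right (by linarith) hpos
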